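/- Let r₀ ∈ (0,1) be the unique zero in (0,1) of the derivative of φ. Let W > 0 satisfy 1/(1+W) > r₀ and let λ satisfy Λ_*(W) < λ < (1+W)³·φ(r₀)². Then there exist exactly two values m ∈ (0,1) such that λ = (1+W)³·φ(m/(1+W))². -/

import Mathlib

/-- `φ(r) = √(r(1−r)) + (1−r)^{3/2}·log(1+√r) − (1/2)(1−r)^{3/2}·log(1−r)`. -/
noncomputable def phi (r : ℝ) : ℝ :=
  Real.sqrt (r * (1 - r)) + (1 - r) ^ ((3 : ℝ) / 2) * Real.log (1 + Real.sqrt r)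
    - (1 / 2) * (1 - r) ^ ((3 : ℝ) / 2) * Real.log (1 - r)

/-- `Λ_*(W) = (1+W)³·φ(1/(1+W))²`. -/
noncomputable def LambdaStar (W : ℝ) : ℝ := (1 + W) ^ 3 * (phi (1 / (1 + W))) ^ 2

lemma phi_zero : phi 0 = 0 := by
  simp [phi]

lemma phi_pos {r : ℝ} (h0 : 0 < r) (h1 : r < 1) : 0 < phi r := by
  have hs : 0 < Real.sqrt (r * (1 - r)) := Real.sqrt_pos.2 (by nlinarith)
  have hp : 0 < (1 - r) ^ ((3 : ℝ) / 2) := Real.rpow_pos_of_pos (by linarith) _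
  have hl1 : 0 < Real.log (1 + Real.sqrt r) :=
    Real.log_pos (by nlinarith [Real.sqrt_pos.2 h0])
  have hl2 : Real.log (1 - r) < 0 := Real.log_neg (by linarith) (by linarith)
  unfold phi
  nlinarith

lemma phi_diff {r : ℝ} (h0 : 0 < r) (h1 : r < 1) : DifferentiableAt ℝ phi r := by
  have hne : (1 : ℝ) - r ≠ 0 := by linarith
  have h2 : DifferentiableAt ℝ (fun r : ℝ => (1 - r) ^ ((3 : ℝ) / 2)) r :=
    ((differentiableAt_const (1:ℝ)).sub differentiableAt_id).rpow_const (Or.inl hne)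
  have h1' : DifferentiableAt ℝ (fun r : ℝ => Real.sqrt (r * (1 - r))) r :=
    (differentiableAt_id.mul ((differentiableAt_const (1:ℝ)).sub differentiableAt_id)).sqrt
      (mul_pos h0 (sub_pos.2 h1)).ne'
  have h3 : DifferentiableAt ℝ (fun r : ℝ => Real.log (1 + Real.sqrt r)) r := by
    have hsq : DifferentiableAt ℝ Real.sqrt r := by
      simpa using (differentiableAt_id.sqrt (ne_of_gt h0))
    exact ((differentiableAt_const (1:ℝ)).add hsq).log (ne_of_gt (add_pos_of_pos_of_nonneg one_pos (Real.sqrt_nonneg r)))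
  have h4 : DifferentiableAt ℝ (fun r : ℝ => Real.log (1 - r)) r :=
    ((differentiableAt_const (1:ℝ)).sub differentiableAt_id).log hne
  exact (h1'.add (h2.mul h3)).sub (((differentiableAt_const ((1:ℝ)/2)).mul h2).mul h4)

lemma phi_cont {r : ℝ} (h0 : 0 ≤ r) (h1 : r < 1) : ContinuousAt phi r := by
  have hne : (1 : ℝ) - r ≠ 0 := by linarith
  have h2 : ContinuousAt (fun r : ℝ => (1 - r) ^ ((3 : ℝ) / 2)) r :=
    (Real.continuousAt_rpow_const _ _ (Or.inr (by norm_num))).comp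
      (continuousAt_const.sub continuousAt_id)
  have h1' : ContinuousAt (fun r : ℝ => Real.sqrt (r * (1 - r))) r :=
    Real.continuous_sqrt.continuousAt.comp
      (continuousAt_id.mul (continuousAt_const.sub continuousAt_id))
  have h3 : ContinuousAt (fun r : ℝ => Real.log (1 + Real.sqrt r)) r := by
    have hpos : (0:ℝ) < 1 + Real.sqrt r := by positivity
    exact ContinuousAt.log (continuousAt_const.add (Real.continuous_sqrt.continuousAt))
      (ne_of_gt hpos)
  have h4 : ContinuousAt (fun r : ℝ => Real.log (1 - r)) r :=
    ContinuousAt.log (continuousAt_const.sub continuousAt_id) hne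
  exact (h1'.add (h2.mul h3)).sub ((continuousAt_const.mul h2).mul h4)

/-- Case (II): for `1/(1+W) > r₀` and `Λ_*(W) < λ < (1+W)³·φ(r₀)²`, there are exactly
two values `m ∈ (0,1)` with `λ = (1+W)³·φ(m/(1+W))²`. -/
theorem stmt_16 (r₀ W lam : ℝ)
    (hr₀ : r₀ ∈ Set.Ioo (0 : ℝ) 1) (hzero : deriv phi r₀ = 0)
    (huniq : ∀ r ∈ Set.Ioo (0 : ℝ) 1, deriv phi r = 0 → r = r₀)
    (hW : 0 < W) (hWr : r₀ < 1 / (1 + W))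
    (hlam0 : LambdaStar W < lam) (hlam1 : lam < (1 + W) ^ 3 * (phi r₀) ^ 2) :
    ∃ m₁ m₂ : ℝ, m₁ ∈ Set.Ioo (0 : ℝ) 1 ∧ m₂ ∈ Set.Ioo (0 : ℝ) 1 ∧ m₁ ≠ m₂ ∧
      lam = (1 + W) ^ 3 * (phi (m₁ / (1 + W))) ^ 2 ∧
      lam = (1 + W) ^ 3 * (phi (m₂ / (1 + W))) ^ 2 ∧
      ∀ m ∈ Set.Ioo (0 : ℝ) 1,
        lam = (1 + W) ^ 3 * (phi (m / (1 + W))) ^ 2 → m = m₁ ∨ m = m₂ := by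
  obtain ⟨hr0, hr1⟩ := hr₀
  set v : ℝ := 1 + W with hv_def
  have hv1 : (1 : ℝ) < v := by simp [hv_def]; linarith
  have hv0 : (0 : ℝ) < v := by linarith
  have hv3 : (0 : ℝ) < v ^ 3 := by positivity
  set s : ℝ := 1 / v with hs_def
  have hs0 : 0 < s := by positivity
  have hs1 : s < 1 := by
    rw [hs_def, div_lt_one hv0]; exact hv1
  have hrs : r₀ < s := hWr
  have hphis : 0 < phi s := phi_pos hs0 hs1
  have hphir : 0 < phi r₀ := phi_pos hr0 hr1
  have hlamS : v ^ 3 * (phi s) ^ 2 < lam := hlam0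
  have hlam_pos : 0 < lam := lt_trans (by positivity) hlamS
  set μ : ℝ := Real.sqrt (lam / v ^ 3) with hμ_def
  have hμ0 : 0 < μ := Real.sqrt_pos.2 (by positivity)
  have hμsq : μ ^ 2 = lam / v ^ 3 := Real.sq_sqrt (by positivity)
  have hlamμ : lam = v ^ 3 * μ ^ 2 := by
    rw [hμsq]; field_simp
  -- bounds on μ
  have hμlt : μ < phi r₀ := by
    have h2 : μ ^ 2 < (phi r₀) ^ 2 := by
      rw [hμsq, div_lt_iff₀ hv3]; nlinarith
    nlinarith
  have hμgt : phi s < μ := by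
    have h2 : (phi s) ^ 2 < μ ^ 2 := by
      rw [hμsq, lt_div_iff₀ hv3]; nlinarith
    nlinarith
  -- strict monotone on Icc 0 r₀
  have hcont1 : ContinuousOn phi (Set.Icc 0 r₀) := fun x hx =>
    (phi_cont hx.1 (lt_of_le_of_lt hx.2 hr1)).continuousWithinAt
  have hD1 := hasDerivWithinAt_forall_lt_or_forall_gt_of_forall_ne (convex_Ioo 0 r₀)
    (f := phi) (f' := deriv phi)
    (fun x hx => ((phi_diff hx.1 (hx.2.trans hr1)).hasDerivAt).hasDerivWithinAt)
    (m := 0)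
    (fun x hx h => absurd (huniq x ⟨hx.1, hx.2.trans hr1⟩ h) (ne_of_lt hx.2))
  have hmono : StrictMonoOn phi (Set.Icc 0 r₀) := by
    rcases hD1 with hneg | hpos
    · exfalso
      have hanti : StrictAntiOn phi (Set.Icc 0 r₀) :=
        strictAntiOn_of_deriv_neg (convex_Icc 0 r₀) hcont1
          (fun x hx => by rw [interior_Icc] at hx; exact hneg x hx)
      have := hanti (Set.left_mem_Icc.2 hr0.le) (Set.right_mem_Icc.2 hr0.le) hr0
      rw [phi_zero] at this
      linarith
    · exact strictMonoOn_of_deriv_pos (convex_Icc 0 r₀) hcont1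
        (fun x hx => by rw [interior_Icc] at hx; exact hpos x hx)
  -- strict antitone on Icc r₀ s
  have hcont2 : ContinuousOn phi (Set.Icc r₀ s) := fun x hx =>
    (phi_cont (hr0.le.trans hx.1) (lt_of_le_of_lt hx.2 hs1)).continuousWithinAt
  have hD2 := hasDerivWithinAt_forall_lt_or_forall_gt_of_forall_ne (convex_Ioo r₀ 1)
    (f := phi) (f' := deriv phi)
    (fun x hx => ((phi_diff (hr0.trans hx.1) hx.2).hasDerivAt).hasDerivWithinAt)
    (m := 0)
    (fun x hx h => absurd (huniq x ⟨hr0.trans hx.1, hx.2⟩ h) (ne_of_gt hx.1))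
  have hanti : StrictAntiOn phi (Set.Icc r₀ s) := by
    rcases hD2 with hneg | hpos
    · exact strictAntiOn_of_deriv_neg (convex_Icc r₀ s) hcont2
        (fun x hx => by
          rw [interior_Icc] at hx; exact hneg x ⟨hx.1, hx.2.trans hs1⟩)
    · exfalso
      have hmono2 : StrictMonoOn phi (Set.Icc r₀ s) :=
        strictMonoOn_of_deriv_pos (convex_Icc r₀ s) hcont2
          (fun x hx => by
            rw [interior_Icc] at hx; exact hpos x ⟨hx.1, hx.2.trans hs1⟩)
      have := hmono2 (Set.left_mem_Icc.2 hrs.le) (Set.right_mem_Icc.2 hrs.le) hrs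
      linarith
  -- the peak point
  set mstar : ℝ := r₀ * v with hmstar_def
  have hmstar0 : 0 < mstar := by positivity
  have hmstar1 : mstar < 1 := by
    rw [hmstar_def]
    calc r₀ * v < (1 / v) * v := by
          exact mul_lt_mul_of_pos_right hWr hv0
      _ = 1 := by field_simp
  have hmv : mstar / v = r₀ := by
    rw [hmstar_def]; field_simp
  -- continuity of psi(m) = phi (m / v)
  have hdle : ∀ {a b : ℝ}, a ≤ b → a / v ≤ b / v := fun h => (div_le_div_iff_of_pos_right hv0).2 h
  have hψcont : ∀ t ∈ Set.Icc (0:ℝ) 1, ContinuousAt (fun m : ℝ => phi (m / v)) t := by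
    intro t ht
    have h0 : 0 ≤ t / v := div_nonneg ht.1 hv0.le
    have h1 : t / v < 1 := by
      have : t / v ≤ 1 / v := hdle ht.2
      rw [← hs_def] at this
      linarith
    have hdc : ContinuousAt (fun m : ℝ => m / v) t := continuousAt_id.div_const v
    exact ContinuousAt.comp (g := phi) (f := fun m : ℝ => m / v) (x := t) (phi_cont h0 h1) hdc
  have hc1 : ContinuousOn (fun m : ℝ => phi (m / v)) (Set.Icc 0 mstar) :=
    fun t ht => (hψcont t ⟨ht.1, ht.2.trans hmstar1.le⟩).continuousWithinAt
  have hc2 : ContinuousOn (fun m : ℝ => phi (m / v)) (Set.Icc mstar 1) :=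
    fun t ht => (hψcont t ⟨hmstar0.le.trans ht.1, ht.2⟩).continuousWithinAt
  -- first solution, on (0, mstar)
  have hIVT1 := intermediate_value_Ioo hmstar0.le hc1
  have hμmem1 : μ ∈ Set.Ioo ((fun m : ℝ => phi (m / v)) 0) ((fun m : ℝ => phi (m / v)) mstar) := by
    show μ ∈ Set.Ioo (phi (0 / v)) (phi (mstar / v))
    rw [zero_div, phi_zero, hmv]
    exact ⟨hμ0, hμlt⟩
  obtain ⟨m₁, hm₁mem, hm₁⟩ := hIVT1 hμmem1
  have hm₁' : phi (m₁ / v) = μ := hm₁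
  -- second solution, on (mstar, 1)
  have hIVT2 := intermediate_value_Ioo' hmstar1.le hc2
  have hμmem2 : μ ∈ Set.Ioo ((fun m : ℝ => phi (m / v)) 1) ((fun m : ℝ => phi (m / v)) mstar) := by
    show μ ∈ Set.Ioo (phi (1 / v)) (phi (mstar / v))
    rw [← hs_def, hmv]
    exact ⟨hμgt, hμlt⟩
  obtain ⟨m₂, hm₂mem, hm₂⟩ := hIVT2 hμmem2
  have hm₂' : phi (m₂ / v) = μ := hm₂
  -- key equivalence
  have hkey : ∀ m : ℝ, 0 < m → m < 1 → (lam = v ^ 3 * (phi (m / v)) ^ 2 ↔ phi (m / v) = μ) := by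
    intro m h0 h1
    have hd0 : 0 < m / v := div_pos h0 hv0
    have hd1 : m / v < 1 := by
      have : m / v ≤ 1 / v := hdle h1.le
      rw [← hs_def] at this
      linarith
    have hp : 0 < phi (m / v) := phi_pos hd0 hd1
    constructor
    · intro h
      have h2 : (phi (m / v)) ^ 2 = μ ^ 2 := by
        rw [hμsq, h]; field_simp
      calc phi (m / v) = Real.sqrt ((phi (m / v)) ^ 2) := (Real.sqrt_sq hp.le).symm
        _ = Real.sqrt (μ ^ 2) := by rw [h2]
        _ = μ := Real.sqrt_sq hμ0.le
    · intro h; rw [h]; exact hlamμ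
  have hm₁01 : m₁ ∈ Set.Ioo (0:ℝ) 1 := ⟨hm₁mem.1, hm₁mem.2.trans hmstar1⟩
  have hm₂01 : m₂ ∈ Set.Ioo (0:ℝ) 1 := ⟨hmstar0.trans hm₂mem.1, hm₂mem.2⟩
  refine ⟨m₁, m₂, hm₁01, hm₂01, ne_of_lt (hm₁mem.2.trans hm₂mem.1),
    (hkey m₁ hm₁01.1 hm₁01.2).2 hm₁', (hkey m₂ hm₂01.1 hm₂01.2).2 hm₂', ?_⟩
  intro m hm heq
  have hφm : phi (m / v) = μ := (hkey m hm.1 hm.2).1 heq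
  have hmne : m ≠ mstar := by
    intro h
    rw [h, hmv] at hφm
    exact absurd hφm (ne_of_gt hμlt)
  have hdiv_inj : ∀ {a b : ℝ}, a / v = b / v → a = b := by
    intro a b h
    field_simp at h
    exact h
  rcases lt_or_gt_of_ne hmne with hlt | hgt
  · left
    have e1 : m / v ∈ Set.Icc (0:ℝ) r₀ :=
      ⟨div_nonneg hm.1.le hv0.le, by rw [← hmv]; exact hdle hlt.le⟩
    have e2 : m₁ / v ∈ Set.Icc (0:ℝ) r₀ :=
      ⟨div_nonneg hm₁mem.1.le hv0.le, by rw [← hmv]; exact hdle hm₁mem.2.le⟩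
    exact hdiv_inj (hmono.injOn e1 e2 (by rw [hφm, hm₁']))
  · right
    have hles : ∀ {a : ℝ}, a ≤ 1 → a / v ≤ s := by
      intro a ha
      have := hdle ha
      rwa [← hs_def] at this
    have e1 : m / v ∈ Set.Icc r₀ s :=
      ⟨by rw [← hmv]; exact hdle hgt.le, hles hm.2.le⟩
    have e2 : m₂ / v ∈ Set.Icc r₀ s :=
      ⟨by rw [← hmv]; exact hdle hm₂mem.1.le, hles hm₂mem.2.le⟩
    exact hdiv_inj (hanti.injOn e1 e2 (by rw [hφm, hm₂']))
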